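/- Let v : ℝ → ℝ be twice continuously differentiable with v''(x) ≥ ε for all x, for some ε > 0, and let μ be the probability measure with density e^{−v}. Then the monotone rearrangement map T transporting the standard Gaussian measure γ onto μ is Lipschitz with constant at most 1/√ε, i.e., 0 ≤ T'(x) ≤ 1/√ε wherever T is differentiable. -/

import Mathlib

open MeasureTheory ProbabilityTheory Set Filter Real

namespace CaffOneD

/-! ### FTC for cdf-style integrals -/

lemma hasDerivAt_integral_Iic {f : ℝ → ℝ} (hf : Integrable f) (hc : Continuous f) (t : ℝ) :
    HasDerivAt (fun y => ∫ s in Set.Iic y, f s) (f t) t := by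
  have key : ∀ y : ℝ, ∫ s in Set.Iic y, f s
      = (∫ s in Set.Iic (0:ℝ), f s) + ∫ s in (0:ℝ)..y, f s := by
    intro y
    rw [← intervalIntegral.integral_Iic_sub_Iic hf.integrableOn hf.integrableOn]
    ring
  have h2 : HasDerivAt (fun y => (∫ s in Set.Iic (0:ℝ), f s) + ∫ s in (0:ℝ)..y, f s) (f t) t := by
    apply HasDerivAt.const_add
    exact intervalIntegral.integral_hasDerivAt_right hf.intervalIntegrable
      hc.stronglyMeasurable.stronglyMeasurableAtFilter hc.continuousAt
  exact (funext_iff.mpr key) ▸ h2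

/-! ### The Gaussian error function `E` -/

lemma gauss_integrable : Integrable (fun s : ℝ => rexp (-s^2/2)) := by
  have := integrable_exp_neg_mul_sq (b := 1/2) (by norm_num)
  convert this using 2 with s
  ring_nf

noncomputable def E (t : ℝ) : ℝ := ∫ s in Set.Iic t, rexp (-s^2/2)

lemma E_hasDerivAt (t : ℝ) : HasDerivAt E (rexp (-t^2/2)) t :=
  hasDerivAt_integral_Iic gauss_integrable (by continuity) t

lemma gauss_total : ∫ s : ℝ, rexp (-s^2/2) = √(2*π) := by
  have h := integral_gaussian (1/2)
  have h2 : π / (1/2 : ℝ) = 2 * π := by ring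
  rw [h2] at h
  rw [← h]
  congr 1 with s
  ring_nf

lemma E_pos (t : ℝ) : 0 < E t := by
  rw [E, setIntegral_pos_iff_support_of_nonneg_ae]
  · have : (Function.support fun s : ℝ => rexp (-s^2/2)) = univ := by
      ext s; simp [Function.support, Real.exp_ne_zero]
    rw [this, univ_inter]
    simp
  · filter_upwards with s using (Real.exp_pos _).le
  · exact gauss_integrable.integrableOn

lemma E_add_Ioi (t : ℝ) : E t + ∫ s in Set.Ioi t, rexp (-s^2/2) = √(2*π) := by
  rw [E, intervalIntegral.integral_Iic_add_Ioi gauss_integrable.integrableOn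
    gauss_integrable.integrableOn, gauss_total]

lemma E_lt (t : ℝ) : E t < √(2*π) := by
  have h := E_add_Ioi t
  have hpos : 0 < ∫ s in Set.Ioi t, rexp (-s^2/2) := by
    rw [setIntegral_pos_iff_support_of_nonneg_ae]
    · have : (Function.support fun s : ℝ => rexp (-s^2/2)) = univ := by
        ext s; simp [Function.support, Real.exp_ne_zero]
      rw [this, univ_inter]
      simp
    · filter_upwards with s using (Real.exp_pos _).le
    · exact gauss_integrable.integrableOn
  linarith

lemma E_neg (t : ℝ) : E (-t) = √(2*π) - E t := by
  have h := integral_comp_neg_Iic (-t) (fun s : ℝ => rexp (-s^2/2))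
  simp only [neg_neg] at h
  have h2 : E (-t) = ∫ s in Set.Ioi t, rexp (-s^2/2) := by
    rw [E, ← h]
    congr 1 with s
    ring_nf
  linarith [E_add_Ioi t]

/-! ### Substitution lemmas for integrals over `Iic` -/

lemma integral_Iic_comp_add (g : ℝ → ℝ) (c y : ℝ) :
    ∫ z in Set.Iic y, g (z + c) = ∫ z in Set.Iic (y + c), g z := by
  have h := (measurePreserving_add_right (volume : Measure ℝ) c).setIntegral_preimage_emb
    (measurableEmbedding_addRight c) g (Set.Iic (y + c))
  rw [← h]
  congr 1
  ext z
  simp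

lemma integral_Iic_comp_mul {b : ℝ} (hb : 0 < b) (g : ℝ → ℝ) (y : ℝ) :
    ∫ z in Set.Iic y, g (b * z) = b⁻¹ * ∫ z in Set.Iic (b * y), g z := by
  have h1 : ∫ z in Set.Iic y, g (b * z) = ∫ z in Set.Ioi (-y), g (-(b * z)) := by
    have := integral_comp_neg_Iic y (fun x => g (-(b * x)))
    simp only [mul_neg, neg_neg] at this
    rw [← this]
  rw [h1]
  rw [show (∫ z in Set.Ioi (-y), g (-(b * z)))
      = ∫ x in Set.Ioi (-y), (fun x => g (-x)) (b * x) by rfl]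
  rw [integral_comp_mul_left_Ioi (fun x => g (-x)) (-y) hb]
  rw [integral_comp_neg_Ioi]
  simp [smul_eq_mul, mul_neg, neg_neg]

/-! ### Mills ratio -/

lemma integrable_x_gauss : Integrable (fun s : ℝ => s * rexp (-s^2/2)) := by
  have := integrable_mul_exp_neg_mul_sq (b := 1/2) (by norm_num)
  convert this using 2 with s
  ring_nf

lemma hasDerivAt_neg_gauss (s : ℝ) :
    HasDerivAt (fun u : ℝ => -rexp (-u^2/2)) (s * rexp (-s^2/2)) s := by
  have h0 := ((hasDerivAt_pow 2 s).div_const 2).neg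
  norm_num at h0
  have h : HasDerivAt (fun u : ℝ => -u^2/2) (-s) s := by
    convert h0 using 2 with u
    · rfl
    · rfl
    simp only [Pi.neg_apply]
    ring
  have := (h.exp).neg
  convert this using 1
  · rfl
  · rfl
  · funext u; simp only [Pi.neg_apply]
  ring

lemma sq_half_tendsto : Tendsto (fun u : ℝ => -u^2/2) atTop atBot := by
  have h : Tendsto (fun u : ℝ => u^2/2) atTop atTop :=
    (tendsto_pow_atTop (two_ne_zero)).atTop_div_const (by norm_num)
  have := tendsto_neg_atBot_iff.mpr h
  exact this.congr (fun u => by ring)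

lemma integral_x_gauss_Ioi (t : ℝ) :
    ∫ s in Set.Ioi t, s * rexp (-s^2/2) = rexp (-t^2/2) := by
  have h := integral_Ioi_of_hasDerivAt_of_tendsto
    (f := fun u : ℝ => -rexp (-u^2/2)) (f' := fun s => s * rexp (-s^2/2)) (a := t) (m := 0)
    ?_ (fun x _ => hasDerivAt_neg_gauss x) integrable_x_gauss.integrableOn ?_
  · rw [h]; ring
  · exact (hasDerivAt_neg_gauss t).continuousAt.continuousWithinAt
  · rw [show (0:ℝ) = -0 by ring]
    exact (Real.tendsto_exp_atBot.comp sq_half_tendsto).neg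

lemma mills (t : ℝ) : t * (√(2*π) - E t) ≤ rexp (-t^2/2) := by
  rcases le_or_gt t 0 with ht | ht
  · have h1 : 0 < √(2*π) - E t := by linarith [E_lt t]
    nlinarith [Real.exp_pos (-t^2/2)]
  · have h2 : √(2*π) - E t = ∫ s in Set.Ioi t, rexp (-s^2/2) := by linarith [E_add_Ioi t]
    rw [h2, ← integral_const_mul]
    calc ∫ s in Set.Ioi t, t * rexp (-s^2/2)
        ≤ ∫ s in Set.Ioi t, s * rexp (-s^2/2) := by
          apply setIntegral_mono_on
          · exact (gauss_integrable.const_mul t).integrableOn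
          · exact integrable_x_gauss.integrableOn
          · exact measurableSet_Ioi
          · intro s hs
            have : t ≤ s := (le_of_lt hs)
            nlinarith [Real.exp_pos (-s^2/2)]
      _ = rexp (-t^2/2) := integral_x_gauss_Ioi t

noncomputable def R (t : ℝ) : ℝ := (√(2*π) - E t) * rexp (t^2/2)

lemma R_hasDerivAt (t : ℝ) :
    HasDerivAt R ((√(2*π) - E t) * (rexp (t^2/2) * t) - 1) t := by
  have h0 := (hasDerivAt_pow 2 t).div_const 2
  norm_num at h0
  have h : HasDerivAt (fun u : ℝ => u^2/2) t t := h0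
  have := ((hasDerivAt_const t (√(2*π))).sub (E_hasDerivAt t)).mul h.exp
  convert this using 1
  · rfl
  · rfl
  · rfl
  rw [show (0 - rexp (-t^2/2)) * rexp (t^2/2) = -(rexp (-t^2/2) * rexp (t^2/2)) by ring,
    ← Real.exp_add, show (-t^2/2 + t^2/2 : ℝ) = 0 by ring, Real.exp_zero]
  simp only [Pi.sub_apply]
  ring

lemma R_antitone : Antitone R := by
  apply antitone_of_deriv_nonpos
  · exact fun t => (R_hasDerivAt t).differentiableAt
  · intro t
    rw [(R_hasDerivAt t).deriv]
    have hm := mills t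
    have he : 0 < rexp (t^2/2) := Real.exp_pos _
    have key : (√(2*π) - E t) * (rexp (t^2/2) * t) ≤ rexp (-t^2/2) * rexp (t^2/2) := by
      have := mul_le_mul_of_nonneg_right hm he.le
      calc (√(2*π) - E t) * (rexp (t^2/2) * t) = t * (√(2*π) - E t) * rexp (t^2/2) := by ring
        _ ≤ rexp (-t^2/2) * rexp (t^2/2) := this
    rw [← Real.exp_add, show (-t^2/2 + t^2/2 : ℝ) = 0 by ring, Real.exp_zero] at key
    linarith

/-! ### Strong convexity -/

lemma strong_convex {ε : ℝ} {v : ℝ → ℝ} (hv : ContDiff ℝ 2 v)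
    (hconv : ∀ x, ε ≤ deriv (deriv v) x) (y z : ℝ) :
    v y + deriv v y * (z - y) + ε/2 * (z-y)^2 ≤ v z := by
  have h2 : ContDiff ℝ (1+1) v := by norm_num at hv ⊢; exact hv
  rw [contDiff_succ_iff_deriv] at h2
  have hdv : Differentiable ℝ v := h2.1
  have hdv2 : Differentiable ℝ (deriv v) := h2.2.2.differentiable one_ne_zero
  set b := deriv v y with hb
  set h : ℝ → ℝ := fun z => v z - (v y + b * (z - y) + ε/2 * (z-y)^2) with hh
  set g : ℝ → ℝ := fun z => deriv v z - b - ε * (z - y) with hg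
  have hh' : ∀ w, HasDerivAt h (g w) w := by
    intro w
    have h1 : HasDerivAt v (deriv v w) w := (hdv w).hasDerivAt
    have h2 : HasDerivAt (fun z => v y + b * (z - y) + ε/2 * (z-y)^2)
        (b + ε * (w - y)) w := by
      have ha : HasDerivAt (fun z : ℝ => z - y) 1 w := (hasDerivAt_id w).sub_const y
      have hb2 : HasDerivAt (fun z : ℝ => b * (z - y)) b w := by
        simpa using ha.const_mul b
      have hc : HasDerivAt (fun z : ℝ => ε/2 * (z-y)^2) (ε * (w - y)) w := by
        have := (ha.pow 2).const_mul (ε/2)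
        convert this using 1
        · rfl
        · rfl
        simp
        ring
      have := (hb2.const_add (v y)).add hc
      convert this using 1 <;> rfl
    have := h1.sub h2
    convert this using 1
    · rfl
    · rfl
    · rfl
    rw [hg]
    ring
  have hgw : ∀ w, HasDerivAt g (deriv (deriv v) w - ε) w := by
    intro w
    have h1 : HasDerivAt (deriv v) (deriv (deriv v) w) w := (hdv2 w).hasDerivAt
    have h2 : HasDerivAt (fun z : ℝ => b + ε * (z - y)) ε w := by
      simpa using (((hasDerivAt_id w).sub_const y).const_mul ε).const_add b
    have h3 := h1.sub h2
    convert h3 using 1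
    · rfl
    · rfl
    funext z; rw [hg]; simp only [Pi.sub_apply]; ring
  have hgmono : Monotone g := by
    apply monotone_of_deriv_nonneg
    · exact fun w => (hgw w).differentiableAt
    · intro w
      rw [(hgw w).deriv]
      linarith [hconv w]
  have hgy : g y = 0 := by simp [hg, hb]
  have hhy : h y = 0 := by simp [hh]
  have key : 0 ≤ h z := by
    rcases le_total y z with hyz | hyz
    · have hmono : MonotoneOn h (Set.Ici y) := by
        apply monotoneOn_of_deriv_nonneg (convex_Ici y)
        · exact fun w _ => (hh' w).continuousAt.continuousWithinAt
        · intro w _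
          exact (hh' w).differentiableAt.differentiableWithinAt
        · intro w hw
          rw [(hh' w).deriv, ← hgy]
          exact hgmono (le_of_lt (by simpa using hw))
      have := hmono (Set.self_mem_Ici) (by exact hyz) hyz
      rwa [hhy] at this
    · have hanti : AntitoneOn h (Set.Iic y) := by
        apply antitoneOn_of_deriv_nonpos (convex_Iic y)
        · exact fun w _ => (hh' w).continuousAt.continuousWithinAt
        · intro w _
          exact (hh' w).differentiableAt.differentiableWithinAt
        · intro w hw
          rw [(hh' w).deriv, ← hgy]
          exact hgmono (le_of_lt (by simpa using hw))
      have := hanti (by exact hyz) (Set.self_mem_Iic) hyz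
      rwa [hhy] at this
  rw [hh] at key
  linarith

/-! ### cdf computations -/

section
variable {v : ℝ → ℝ} (hv : Continuous v) {μ : Measure ℝ}
  (hμ : μ = volume.withDensity fun x => ENNReal.ofReal (Real.exp (-v x)))
  [IsProbabilityMeasure μ]

include hv hμ

omit hv in
lemma lintegral_exp_neg_v : ∫⁻ z, ENNReal.ofReal (rexp (-v z)) = 1 := by
  have h := measure_univ (μ := μ)
  rw [hμ, withDensity_apply _ MeasurableSet.univ, Measure.restrict_univ] at h
  exact h

lemma exp_neg_v_integrable : Integrable (fun z => rexp (-v z)) := by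
  have hm : Measurable fun z => rexp (-v z) := (Real.continuous_exp.comp hv.neg).measurable
  refine ⟨hm.aestronglyMeasurable, ?_⟩
  rw [hasFiniteIntegral_iff_ofReal (by filter_upwards with z using (Real.exp_pos _).le)]
  rw [lintegral_exp_neg_v hμ]
  exact ENNReal.one_lt_top

lemma integral_exp_neg_v : ∫ z, rexp (-v z) = 1 := by
  rw [integral_eq_lintegral_of_nonneg_ae (by filter_upwards with z using (Real.exp_pos _).le)
    (exp_neg_v_integrable hv hμ).aestronglyMeasurable]
  rw [lintegral_exp_neg_v hμ]
  simp

lemma cdf_mu_eq (y : ℝ) : cdf μ y = ∫ z in Set.Iic y, rexp (-v z) := by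
  rw [cdf_eq_real, measureReal_def, hμ, withDensity_apply _ measurableSet_Iic,
    ← ofReal_integral_eq_lintegral_ofReal ((exp_neg_v_integrable hv hμ).integrableOn)
      (by filter_upwards with z using (Real.exp_pos _).le),
    ENNReal.toReal_ofReal (integral_nonneg (fun z => (Real.exp_pos _).le))]

end

lemma cdf_gauss_eq (x : ℝ) : cdf (gaussianReal 0 1) x = (√(2*π))⁻¹ * E x := by
  rw [cdf_eq_real, measureReal_def, gaussianReal_apply_eq_integral 0 one_ne_zero (Set.Iic x),
    ENNReal.toReal_ofReal (integral_nonneg (fun z => gaussianPDFReal_nonneg _ _ _)), E,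
    ← integral_const_mul]
  congr 1 with z
  rw [gaussianPDFReal]
  norm_num

/-! ### The monotone rearrangement -/

lemma cdf_strictMono {μ : Measure ℝ} [IsProbabilityMeasure μ] {f : ℝ → ℝ}
    (hf : Integrable f) (hpos : ∀ z, 0 < f z)
    (hcdf : ∀ y, cdf μ y = ∫ z in Set.Iic y, f z) : StrictMono (cdf μ) := by
  intro y1 y2 h12
  have key : cdf μ y2 - cdf μ y1 = ∫ z in y1..y2, f z := by
    rw [hcdf, hcdf, intervalIntegral.integral_Iic_sub_Iic hf.integrableOn hf.integrableOn]
  have hpos2 : 0 < ∫ z in y1..y2, f z :=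
    intervalIntegral.intervalIntegral_pos_of_pos hf.intervalIntegrable hpos h12
  linarith

lemma T_cdf_eq {μ : Measure ℝ} [IsProbabilityMeasure μ]
    (hsm : StrictMono (cdf μ)) (hcont : Continuous (cdf μ))
    (T : ℝ → ℝ)
    (hT : ∀ x, T x = sInf {y : ℝ | cdf (gaussianReal 0 1) x ≤ cdf μ y})
    (x : ℝ) (hp0 : 0 < cdf (gaussianReal 0 1) x) (hp1 : cdf (gaussianReal 0 1) x < 1) :
    cdf μ (T x) = cdf (gaussianReal 0 1) x := by
  set p := cdf (gaussianReal 0 1) x with hp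
  obtain ⟨y1, hy1⟩ := ((tendsto_cdf_atBot μ).eventually_lt_const hp0).exists
  obtain ⟨y2, hy2⟩ := ((tendsto_cdf_atTop μ).eventually_const_lt hp1).exists
  have h12 : y1 ≤ y2 := by
    by_contra h
    push_neg at h
    have := hsm h
    linarith
  obtain ⟨y, _, hy⟩ := intermediate_value_Icc h12 hcont.continuousOn
    (Set.mem_Icc.mpr ⟨hy1.le, hy2.le⟩)
  have hset : {z : ℝ | p ≤ cdf μ z} = Set.Ici y := by
    ext z
    simp only [Set.mem_setOf_eq, Set.mem_Ici]
    rw [← hy, hsm.le_iff_le]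
  rw [hT x, ← hp, hset, csInf_Ici, hy]

/-! ### Gaussian integrals with general variance -/

lemma gauss_eps_integrable {ε : ℝ} (hε : 0 < ε) (m : ℝ) :
    Integrable (fun z : ℝ => rexp (-(ε * (z - m)^2/2))) := by
  have h := (integrable_exp_neg_mul_sq (b := ε/2) (by linarith)).comp_sub_right m
  convert h using 2 with z
  ring_nf

lemma key_integral_Iic {ε : ℝ} (hε : 0 < ε) (m y : ℝ) :
    ∫ z in Set.Iic y, rexp (-(ε * (z - m)^2/2)) = (√ε)⁻¹ * E (√ε * (y - m)) := by
  set sε := √ε with hsε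
  have hsε_pos : 0 < sε := Real.sqrt_pos.mpr hε
  have hsε_sq : sε^2 = ε := Real.sq_sqrt hε.le
  have hpt : ∀ z : ℝ, rexp (-(ε * (z - m)^2/2))
      = (fun w => rexp (-(sε * w)^2/2)) (z + (-m)) := by
    intro z
    simp only []
    congr 1
    rw [mul_pow, hsε_sq]
    ring
  calc ∫ z in Set.Iic y, rexp (-(ε * (z - m)^2/2))
      = ∫ z in Set.Iic y, (fun w => rexp (-(sε * w)^2/2)) (z + (-m)) := by
        congr 1 with z; exact hpt z
    _ = ∫ z in Set.Iic (y + (-m)), rexp (-(sε * z)^2/2) :=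
        integral_Iic_comp_add (fun w => rexp (-(sε * w)^2/2)) (-m) y
    _ = sε⁻¹ * ∫ z in Set.Iic (sε * (y + (-m))), rexp (-z^2/2) := by
        rw [show (∫ z in Set.Iic (y + (-m)), rexp (-(sε * z)^2/2))
            = ∫ z in Set.Iic (y + (-m)), (fun w => rexp (-w^2/2)) (sε * z) from rfl]
        rw [integral_Iic_comp_mul hsε_pos (fun w => rexp (-w^2/2)) (y + (-m))]
    _ = sε⁻¹ * E (sε * (y - m)) := by rw [E]; ring_nf

lemma key_integral_Ioi {ε : ℝ} (hε : 0 < ε) (m y : ℝ) :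
    ∫ z in Set.Ioi y, rexp (-(ε * (z - m)^2/2)) = (√ε)⁻¹ * E (√ε * (m - y)) := by
  have h := integral_comp_neg_Iic (-y) (fun z : ℝ => rexp (-(ε * (z - m)^2/2)))
  simp only [neg_neg] at h
  have h2 : (∫ z in Set.Iic (-y), rexp (-(ε * (-z - m)^2/2)))
      = ∫ z in Set.Iic (-y), rexp (-(ε * (z - (-m))^2/2)) := by
    congr 1 with z
    congr 2
    ring
  rw [← h, h2, key_integral_Iic hε (-m) (-y)]
  congr 2
  ring

end CaffOneD

open CaffOneD

set_option maxHeartbeats 2000000 in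
/-- One-dimensional Caffarelli contraction: if `μ` has density `e^{−v}` with
`v'' ≥ ε > 0`, then the monotone rearrangement map
`T(x) = F_μ^{−1}(F_γ(x))` transporting the standard Gaussian `γ` onto `μ`
satisfies `0 ≤ T' ≤ 1/√ε` wherever `T` is differentiable. -/
theorem monotone_transport_lipschitz
    (ε : ℝ) (hε : 0 < ε) (v : ℝ → ℝ) (hv : ContDiff ℝ 2 v)
    (hconv : ∀ x, ε ≤ deriv (deriv v) x)
    (μ : Measure ℝ)
    (hμ : μ = volume.withDensity fun x => ENNReal.ofReal (Real.exp (-v x)))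
    [IsProbabilityMeasure μ]
    (T : ℝ → ℝ)
    (hT : ∀ x, T x = sInf {y : ℝ | cdf (gaussianReal 0 1) x ≤ cdf μ y}) :
    ∀ x, DifferentiableAt ℝ T x → 0 ≤ deriv T x ∧ deriv T x ≤ 1 / Real.sqrt ε := by
  intro x hdiff
  have hvc : Continuous v := hv.continuous
  have hexpc : Continuous fun z => rexp (-v z) := Real.continuous_exp.comp hvc.neg
  have hint : Integrable (fun z => rexp (-v z)) := exp_neg_v_integrable hvc hμ
  have hcdfμ : ∀ y, cdf μ y = ∫ z in Set.Iic y, rexp (-v z) := cdf_mu_eq hvc hμ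
  have hcdfμfun : cdf μ = fun y => ∫ z in Set.Iic y, rexp (-v z) := funext hcdfμ
  have hFd : ∀ y, HasDerivAt (cdf μ) (rexp (-v y)) y := by
    intro y
    rw [hcdfμfun]
    exact hasDerivAt_integral_Iic hint hexpc y
  have hsm : StrictMono (cdf μ) := cdf_strictMono hint (fun z => Real.exp_pos _) hcdfμ
  have hcont : Continuous (cdf μ) :=
    continuous_iff_continuousAt.mpr fun y => (hFd y).continuousAt
  have h2π : (0:ℝ) < √(2*π) := Real.sqrt_pos.mpr (by positivity)
  have hΦ : ∀ x', cdf (gaussianReal 0 1) x' = (√(2*π))⁻¹ * E x' := cdf_gauss_eq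
  have hp0 : ∀ x', 0 < cdf (gaussianReal 0 1) x' := by
    intro x'
    rw [hΦ x']
    exact mul_pos (inv_pos.mpr h2π) (E_pos x')
  have hp1 : ∀ x', cdf (gaussianReal 0 1) x' < 1 := by
    intro x'
    rw [hΦ x']
    have := E_lt x'
    calc (√(2*π))⁻¹ * E x' < (√(2*π))⁻¹ * √(2*π) :=
          mul_lt_mul_of_pos_left this (inv_pos.mpr h2π)
      _ = 1 := inv_mul_cancel₀ (ne_of_gt h2π)
  have hTc : ∀ x', cdf μ (T x') = cdf (gaussianReal 0 1) x' :=
    fun x' => T_cdf_eq hsm hcont T hT x' (hp0 x') (hp1 x')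
  -- notation
  set y := T x with hy
  set a := v y with ha
  set b := deriv v y with hbdef
  set sε := √ε with hsε
  have hsε_pos : 0 < sε := Real.sqrt_pos.mpr hε
  have hsε_sq : sε^2 = ε := Real.sq_sqrt hε.le
  set c := b / sε with hc
  set m := y - b / ε with hm
  -- derivative identity
  have hΦd : HasDerivAt (cdf (gaussianReal 0 1)) ((√(2*π))⁻¹ * rexp (-x^2/2)) x := by
    rw [funext hΦ]
    exact (E_hasDerivAt x).const_mul _
  have hcomp : HasDerivAt (cdf μ ∘ T) (rexp (-v y) * deriv T x) x :=
    (hFd y).comp x hdiff.hasDerivAt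
  have hcompeq : (cdf μ ∘ T) = cdf (gaussianReal 0 1) := funext hTc
  rw [hcompeq] at hcomp
  have huniq : rexp (-v y) * deriv T x = (√(2*π))⁻¹ * rexp (-x^2/2) := hcomp.unique hΦd
  -- pointwise Gaussian domination from strong convexity
  have hptident : ∀ z : ℝ, rexp (-(a + b*(z-y) + ε/2*(z-y)^2))
      = rexp (-a + c^2/2) * rexp (-(ε * (z - m)^2/2)) := by
    intro z
    rw [← Real.exp_add]
    congr 1
    have hc2 : c^2 = b^2/ε := by
      rw [hc, div_pow, hsε_sq]
    rw [hc2, hm]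
    field_simp
    ring
  have hdom : ∀ z : ℝ, rexp (-v z) ≤ rexp (-a + c^2/2) * rexp (-(ε * (z - m)^2/2)) := by
    intro z
    rw [← hptident z]
    apply Real.exp_le_exp.mpr
    have := strong_convex hv hconv y z
    rw [← ha, ← hbdef] at this
    linarith
  have hbint : Integrable (fun z : ℝ => rexp (-a + c^2/2) * rexp (-(ε * (z - m)^2/2))) :=
    (gauss_eps_integrable hε m).const_mul _
  -- the two tail inequalities
  have hsεym : sε * (y - m) = c := by
    rw [hm, hc]
    field_simp
    rw [← hsε_sq]
    ring
  have hsεmy : sε * (m - y) = -c := by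
    rw [← hsεym]; ring
  have hI : (√(2*π))⁻¹ * E x ≤ rexp (-a + c^2/2) * (sε⁻¹ * E c) := by
    have h1 : (√(2*π))⁻¹ * E x = cdf μ y := by rw [hTc x, hΦ x]
    rw [h1, hcdfμ y]
    calc ∫ z in Set.Iic y, rexp (-v z)
        ≤ ∫ z in Set.Iic y, rexp (-a + c^2/2) * rexp (-(ε * (z - m)^2/2)) :=
          setIntegral_mono_on hint.integrableOn hbint.integrableOn measurableSet_Iic
            (fun z _ => hdom z)
      _ = rexp (-a + c^2/2) * (sε⁻¹ * E c) := by
          rw [integral_const_mul, key_integral_Iic hε m y, ← hsε, hsεym]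
  have hII : 1 - (√(2*π))⁻¹ * E x ≤ rexp (-a + c^2/2) * (sε⁻¹ * (√(2*π) - E c)) := by
    have h1 : (√(2*π))⁻¹ * E x = cdf μ y := by rw [hTc x, hΦ x]
    have h2 : (∫ z in Set.Iic y, rexp (-v z)) + (∫ z in Set.Ioi y, rexp (-v z)) = 1 := by
      rw [intervalIntegral.integral_Iic_add_Ioi hint.integrableOn hint.integrableOn]
      exact integral_exp_neg_v hvc hμ
    have h3 : 1 - (√(2*π))⁻¹ * E x = ∫ z in Set.Ioi y, rexp (-v z) := by
      rw [h1, hcdfμ y]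
      linarith
    rw [h3]
    calc ∫ z in Set.Ioi y, rexp (-v z)
        ≤ ∫ z in Set.Ioi y, rexp (-a + c^2/2) * rexp (-(ε * (z - m)^2/2)) :=
          setIntegral_mono_on hint.integrableOn hbint.integrableOn measurableSet_Ioi
            (fun z _ => hdom z)
      _ = rexp (-a + c^2/2) * (sε⁻¹ * (√(2*π) - E c)) := by
          rw [integral_const_mul, key_integral_Ioi hε m y, ← hsε, hsεmy, E_neg]
  -- the comparison step: 1 ≤ √(2π) * exp(-a) * sε⁻¹ * exp(x²/2)
  have hmain : 1 ≤ √(2*π) * rexp (-a) * sε⁻¹ * rexp (x^2/2) := by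
    have hexp_split : rexp (-a + c^2/2) = rexp (-a) * rexp (c^2/2) := by
      rw [← Real.exp_add]
    have hXXi : rexp (x^2/2) * rexp (-x^2/2) = 1 := by
      rw [← Real.exp_add, show (x^2/2 + -x^2/2 : ℝ) = 0 by ring, Real.exp_zero]
    have hCpos : 0 < rexp (c^2/2) := Real.exp_pos _
    have hXpos : 0 < rexp (x^2/2) := Real.exp_pos _
    have hApos : 0 < rexp (-a) := Real.exp_pos _
    rcases le_total x c with hxc | hcx
    · -- use upper tails: R x ≥ R c
      have hR : (√(2*π) - E c) * rexp (c^2/2) ≤ (√(2*π) - E x) * rexp (x^2/2) :=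
        R_antitone hxc
      have hEc : 0 < √(2*π) - E c := by linarith [E_lt c]
      -- from hII : √(2π) - E x ≤ √(2π) * exp(-a+c²/2) * sε⁻¹ * (√(2π) - E c)
      have hII' : √(2*π) - E x ≤ √(2*π) * rexp (-a + c^2/2) * sε⁻¹ * (√(2*π) - E c) := by
        have := mul_le_mul_of_nonneg_left hII h2π.le
        calc √(2*π) - E x = √(2*π) * (1 - (√(2*π))⁻¹ * E x) := by
              rw [mul_sub, mul_one, ← mul_assoc, mul_inv_cancel₀ (ne_of_gt h2π), one_mul]
          _ ≤ √(2*π) * (rexp (-a + c^2/2) * (sε⁻¹ * (√(2*π) - E c))) := this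
          _ = √(2*π) * rexp (-a + c^2/2) * sε⁻¹ * (√(2*π) - E c) := by ring
      have step : (√(2*π) - E c) * rexp (c^2/2)
          ≤ √(2*π) * rexp (-a + c^2/2) * sε⁻¹ * (√(2*π) - E c) * rexp (x^2/2) := by
        calc (√(2*π) - E c) * rexp (c^2/2) ≤ (√(2*π) - E x) * rexp (x^2/2) := hR
          _ ≤ √(2*π) * rexp (-a + c^2/2) * sε⁻¹ * (√(2*π) - E c) * rexp (x^2/2) := by
              apply mul_le_mul_of_nonneg_right hII' hXpos.le
      rw [hexp_split] at step
      have step' : 1 * ((√(2*π) - E c) * rexp (c^2/2))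
          ≤ (√(2*π) * rexp (-a) * sε⁻¹ * rexp (x^2/2)) * ((√(2*π) - E c) * rexp (c^2/2)) := by
        calc 1 * ((√(2*π) - E c) * rexp (c^2/2)) = (√(2*π) - E c) * rexp (c^2/2) := by ring
          _ ≤ √(2*π) * (rexp (-a) * rexp (c^2/2)) * sε⁻¹ * (√(2*π) - E c) * rexp (x^2/2) := step
          _ = (√(2*π) * rexp (-a) * sε⁻¹ * rexp (x^2/2)) * ((√(2*π) - E c) * rexp (c^2/2)) := by
              ring
      exact le_of_mul_le_mul_right step' (mul_pos hEc hCpos)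
    · -- use lower tails: Q c ≤ Q x via R(-x) ≤ R(-c)
      have hR := R_antitone (neg_le_neg hcx)
      rw [R, R, E_neg, E_neg] at hR
      simp only [neg_sq] at hR
      have hQ : E c * rexp (c^2/2) ≤ E x * rexp (x^2/2) := by linarith [hR]
      have hEc : 0 < E c := E_pos c
      have hI' : E x ≤ √(2*π) * rexp (-a + c^2/2) * sε⁻¹ * E c := by
        have := mul_le_mul_of_nonneg_left hI h2π.le
        calc E x = √(2*π) * ((√(2*π))⁻¹ * E x) := by
              rw [← mul_assoc, mul_inv_cancel₀ (ne_of_gt h2π), one_mul]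
          _ ≤ √(2*π) * (rexp (-a + c^2/2) * (sε⁻¹ * E c)) := this
          _ = √(2*π) * rexp (-a + c^2/2) * sε⁻¹ * E c := by ring
      have step : E c * rexp (c^2/2)
          ≤ √(2*π) * rexp (-a + c^2/2) * sε⁻¹ * E c * rexp (x^2/2) := by
        calc E c * rexp (c^2/2) ≤ E x * rexp (x^2/2) := hQ
          _ ≤ √(2*π) * rexp (-a + c^2/2) * sε⁻¹ * E c * rexp (x^2/2) :=
              mul_le_mul_of_nonneg_right hI' hXpos.le
      rw [hexp_split] at step
      have step' : 1 * (E c * rexp (c^2/2))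
          ≤ (√(2*π) * rexp (-a) * sε⁻¹ * rexp (x^2/2)) * (E c * rexp (c^2/2)) := by
        calc 1 * (E c * rexp (c^2/2)) = E c * rexp (c^2/2) := by ring
          _ ≤ √(2*π) * (rexp (-a) * rexp (c^2/2)) * sε⁻¹ * E c * rexp (x^2/2) := step
          _ = (√(2*π) * rexp (-a) * sε⁻¹ * rexp (x^2/2)) * (E c * rexp (c^2/2)) := by ring
      exact le_of_mul_le_mul_right step' (mul_pos hEc hCpos)
  -- conclude
  have hkey : sε * ((√(2*π))⁻¹ * rexp (-x^2/2)) ≤ rexp (-a) := by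
    have hXXi : rexp (x^2/2) * rexp (-x^2/2) = 1 := by
      rw [← Real.exp_add, show (x^2/2 + -x^2/2 : ℝ) = 0 by ring, Real.exp_zero]
    have hmul := mul_le_mul_of_nonneg_right hmain
      (by positivity : (0:ℝ) ≤ sε * ((√(2*π))⁻¹ * rexp (-x^2/2)))
    have hsimp : √(2*π) * rexp (-a) * sε⁻¹ * rexp (x^2/2) * (sε * ((√(2*π))⁻¹ * rexp (-x^2/2)))
        = rexp (-a) := by
      rw [show √(2*π) * rexp (-a) * sε⁻¹ * rexp (x^2/2) * (sε * ((√(2*π))⁻¹ * rexp (-x^2/2)))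
          = rexp (-a) * (√(2*π) * (√(2*π))⁻¹) * (sε⁻¹ * sε) * (rexp (x^2/2) * rexp (-x^2/2))
          by ring,
        mul_inv_cancel₀ (ne_of_gt h2π), inv_mul_cancel₀ (ne_of_gt hsε_pos), hXXi]
      ring
    calc sε * ((√(2*π))⁻¹ * rexp (-x^2/2))
        = 1 * (sε * ((√(2*π))⁻¹ * rexp (-x^2/2))) := by ring
      _ ≤ √(2*π) * rexp (-a) * sε⁻¹ * rexp (x^2/2) * (sε * ((√(2*π))⁻¹ * rexp (-x^2/2))) := hmul
      _ = rexp (-a) := hsimp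
  have hApos : 0 < rexp (-v y) := Real.exp_pos _
  have hφpos : 0 < (√(2*π))⁻¹ * rexp (-x^2/2) := by positivity
  have hderiv : deriv T x = ((√(2*π))⁻¹ * rexp (-x^2/2)) / rexp (-v y) := by
    rw [eq_div_iff (ne_of_gt hApos)]
    linarith [huniq]
  constructor
  · rw [hderiv]
    positivity
  · rw [hderiv, div_le_div_iff₀ hApos hsε_pos]
    have hkey' : sε * ((√(2*π))⁻¹ * rexp (-x^2/2)) ≤ rexp (-v y) := hkey
    linarith
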